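/- If ξ has the Max-U-Exp(a, λ) distribution, then for every real k > -1, E[ξ^k] = a^k/(k+1) + (k/(a λ^{k+1})) γ(k+1, aλ) + (k/λ^k) Γ(k, λa), where γ and Γ are the lower and upper incomplete Gamma functions. -/

import Mathlib

open MeasureTheory Set

/-- The Max-U-Exp(a, λ) probability density function. -/
noncomputable def maxUExpPDF (a lam x : ℝ) : ℝ :=
  if x ≤ 0 then 0
  else if x ≤ a then (1 / a) * (1 - Real.exp (-lam * x) + lam * x * Real.exp (-lam * x))
  else lam * Real.exp (-lam * x)

/-- The lower incomplete Gamma function γ(s, x) = ∫₀^x t^(s-1) e^{-t} dt. -/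
noncomputable def lowerIncGamma (s x : ℝ) : ℝ :=
  ∫ t in Set.Ioc (0 : ℝ) x, t ^ (s - 1) * Real.exp (-t)

/-- The upper incomplete Gamma function Γ(s, x) = ∫_x^∞ t^(s-1) e^{-t} dt. -/
noncomputable def upperIncGamma (s x : ℝ) : ℝ :=
  ∫ t in Set.Ioi x, t ^ (s - 1) * Real.exp (-t)


open Real Filter Topology

lemma integrableOn_Ioc_rpow_exp {a : ℝ} (ha : 0 < a) {p : ℝ} (hp : -1 < p) (lam : ℝ) :
    IntegrableOn (fun x => x ^ p * Real.exp (-lam * x)) (Ioc 0 a) := by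
  have h := (intervalIntegral.intervalIntegrable_rpow' (a := 0) (b := a) hp).mul_continuousOn
      (Continuous.continuousOn (by fun_prop : Continuous fun x : ℝ => Real.exp (-lam * x)))
  rwa [intervalIntegrable_iff_integrableOn_Ioc_of_le ha.le] at h

lemma integrableOn_Ioi_rpow_exp {a lam : ℝ} (ha : 0 < a) (p : ℝ) (hlam : 0 < lam) :
    IntegrableOn (fun x => x ^ p * Real.exp (-lam * x)) (Ioi a) := by
  apply integrable_of_isBigO_exp_neg (half_pos hlam)
  · intro x hx
    have hx0 : x ≠ 0 := (lt_of_lt_of_le ha hx).ne'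
    exact ((Real.continuousAt_rpow_const x p (Or.inl hx0)).mul
      (by fun_prop : Continuous fun x : ℝ => Real.exp (-lam * x)).continuousAt).continuousWithinAt
  · rw [Asymptotics.isBigO_iff]
    refine ⟨1, ?_⟩
    have h1 : Tendsto (fun x : ℝ => |x ^ p * Real.exp (-(lam/2) * x)|) atTop (𝓝 0) := by
      simpa using (tendsto_rpow_mul_exp_neg_mul_atTop_nhds_zero p (lam/2) (half_pos hlam)).abs
    filter_upwards [h1.eventually_le_const one_pos] with x hx
    have h2 : Real.exp (-lam * x) = Real.exp (-(lam/2) * x) * Real.exp (-(lam/2) * x) := by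
      rw [← Real.exp_add]; ring_nf
    rw [Real.norm_eq_abs, Real.norm_eq_abs, h2, ← mul_assoc, abs_mul,
      abs_of_nonneg (Real.exp_pos _).le]
    exact mul_le_mul_of_nonneg_right hx (Real.exp_pos _).le

lemma hasDerivAt_neg_rpow_exp {lam p x : ℝ} (hx : x ≠ 0) :
    HasDerivAt (fun x : ℝ => -(x ^ p * Real.exp (-lam * x)))
      (lam * (x ^ p * Real.exp (-lam * x)) - p * (x ^ (p-1) * Real.exp (-lam * x))) x := by
  have h1 : HasDerivAt (fun x : ℝ => x ^ p) (p * x ^ (p-1)) x :=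
    Real.hasDerivAt_rpow_const (Or.inl hx)
  have h2 : HasDerivAt (fun x : ℝ => Real.exp (-lam * x)) (Real.exp (-lam * x) * (-lam * 1)) x :=
    (Real.hasDerivAt_exp _).comp x ((hasDerivAt_id x).const_mul (-lam))
  have h3 : HasDerivAt (fun x : ℝ => -(x ^ p * Real.exp (-lam * x)))
      (-(p * x ^ (p - 1) * Real.exp (-lam * x) + x ^ p * (Real.exp (-lam * x) * (-lam * 1)))) x :=
    (h1.mul h2).neg
  convert h3 using 1
  ring

lemma ibp_Ioi {a lam : ℝ} (ha : 0 < a) (hlam : 0 < lam) (p : ℝ) :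
    lam * ∫ x in Ioi a, x ^ p * Real.exp (-lam * x)
      = a ^ p * Real.exp (-lam * a) + p * ∫ x in Ioi a, x ^ (p-1) * Real.exp (-lam * x) := by
  have hint1 := integrableOn_Ioi_rpow_exp ha p hlam
  have hint2 := integrableOn_Ioi_rpow_exp ha (p-1) hlam
  have hkey : ∫ x in Ioi a,
      (lam * (x ^ p * Real.exp (-lam * x)) - p * (x ^ (p-1) * Real.exp (-lam * x)))
      = 0 - -(a ^ p * Real.exp (-lam * a)) := by
    apply integral_Ioi_of_hasDerivAt_of_tendsto'
      (fun x hx => hasDerivAt_neg_rpow_exp (ne_of_gt (lt_of_lt_of_le ha hx)))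
      ((hint1.const_mul lam).sub (hint2.const_mul p))
    simpa using (tendsto_rpow_mul_exp_neg_mul_atTop_nhds_zero p lam hlam).neg
  rw [integral_sub (hint1.const_mul lam) (hint2.const_mul p), integral_const_mul,
    integral_const_mul] at hkey
  linarith

lemma ibp_Ioc {a lam k : ℝ} (ha : 0 < a) (hk : -1 < k) :
    lam * ∫ x in Ioc (0:ℝ) a, x ^ (k+1) * Real.exp (-lam * x)
      = (k+1) * (∫ x in Ioc (0:ℝ) a, x ^ k * Real.exp (-lam * x))
        - a ^ (k+1) * Real.exp (-lam * a) := by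
  have hk1 : (0:ℝ) < k + 1 := by linarith
  have hint1 := integrableOn_Ioc_rpow_exp ha (by linarith : (-1:ℝ) < k + 1) lam
  have hint2 := integrableOn_Ioc_rpow_exp ha hk lam
  have hcont : ContinuousOn (fun x : ℝ => -(x ^ (k+1) * Real.exp (-lam * x))) (Icc 0 a) := by
    apply ContinuousOn.neg
    apply ContinuousOn.mul ?_ (by fun_prop : Continuous fun x : ℝ => Real.exp (-lam*x)).continuousOn
    intro x hx
    exact (Real.continuousAt_rpow_const x (k+1) (Or.inr hk1.le)).continuousWithinAt
  have hkey : ∫ y in (0:ℝ)..a,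
      (lam * (y ^ (k+1) * Real.exp (-lam * y)) - (k+1) * (y ^ k * Real.exp (-lam * y)))
      = -(a ^ (k+1) * Real.exp (-lam * a)) - -((0:ℝ) ^ (k+1) * Real.exp (-lam * 0)) := by
    apply intervalIntegral.integral_eq_sub_of_hasDeriv_right_of_le ha.le hcont
    · intro x hx
      have h := hasDerivAt_neg_rpow_exp (lam := lam) (p := k+1) (ne_of_gt hx.1)
      rw [show k + 1 - 1 = k by ring] at h
      exact h.hasDerivWithinAt
    · rw [intervalIntegrable_iff_integrableOn_Ioc_of_le ha.le]
      exact (hint1.const_mul lam).sub (hint2.const_mul (k+1))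
  rw [Real.zero_rpow hk1.ne', intervalIntegral.integral_of_le ha.le,
    integral_sub (hint1.const_mul lam) (hint2.const_mul (k+1)), integral_const_mul,
    integral_const_mul] at hkey
  simp only [zero_mul, neg_zero, sub_zero] at hkey
  linarith

lemma upper_subst {a lam : ℝ} (ha : 0 < a) (hlam : 0 < lam) (p : ℝ) :
    (∫ t in Ioi (lam * a), t ^ p * Real.exp (-t))
      = lam ^ (p+1) * ∫ x in Ioi a, x ^ p * Real.exp (-lam * x) := by
  have h := integral_comp_mul_left_Ioi (fun t => t ^ p * Real.exp (-t)) a hlam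
  rw [smul_eq_mul] at h
  have h2 : (∫ x in Ioi a, (lam * x) ^ p * Real.exp (-(lam * x)))
      = lam ^ p * ∫ x in Ioi a, x ^ p * Real.exp (-lam * x) := by
    rw [← integral_const_mul]
    apply setIntegral_congr_fun measurableSet_Ioi
    intro x hx
    have hx0 : (0:ℝ) ≤ x := (ha.trans hx).le
    dsimp only
    rw [Real.mul_rpow hlam.le hx0, neg_mul]
    ring
  rw [h2] at h
  have h3 : (∫ t in Ioi (lam * a), t ^ p * Real.exp (-t))
      = lam * (lam ^ p * ∫ x in Ioi a, x ^ p * Real.exp (-lam * x)) := by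
    rw [h]; field_simp
  rw [h3, Real.rpow_add_one hlam.ne']; ring

lemma lower_subst {a lam : ℝ} (ha : 0 < a) (hlam : 0 < lam) (p : ℝ) :
    (∫ t in Ioc (0:ℝ) (a * lam), t ^ p * Real.exp (-t))
      = lam ^ (p+1) * ∫ x in Ioc (0:ℝ) a, x ^ p * Real.exp (-lam * x) := by
  have h := intervalIntegral.integral_comp_mul_left (a := 0) (b := a)
      (fun t => t ^ p * Real.exp (-t)) hlam.ne'
  simp only [smul_eq_mul, mul_zero] at h
  rw [intervalIntegral.integral_of_le ha.le,
    intervalIntegral.integral_of_le (by positivity : (0:ℝ) ≤ lam * a)] at h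
  have h2 : (∫ x in Ioc (0:ℝ) a, (lam * x) ^ p * Real.exp (-(lam * x)))
      = lam ^ p * ∫ x in Ioc (0:ℝ) a, x ^ p * Real.exp (-lam * x) := by
    rw [← integral_const_mul]
    apply setIntegral_congr_fun measurableSet_Ioc
    intro x hx
    dsimp only
    rw [Real.mul_rpow hlam.le hx.1.le, neg_mul]
    ring
  rw [h2] at h
  have h3 : (∫ t in Ioc (0:ℝ) (lam * a), t ^ p * Real.exp (-t))
      = lam * (lam ^ p * ∫ x in Ioc (0:ℝ) a, x ^ p * Real.exp (-lam * x)) := by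
    rw [h]; field_simp
  rw [show a * lam = lam * a by ring, h3, Real.rpow_add_one hlam.ne']; ring


theorem maxUExp_moments (a lam : ℝ) (ha : 0 < a) (hlam : 0 < lam) :
    ∀ k : ℝ, -1 < k →
      (∫ x in Set.Ioi (0 : ℝ), x ^ k * maxUExpPDF a lam x) =
        a ^ k / (k + 1) + (k / (a * lam ^ (k + 1))) * lowerIncGamma (k + 1) (a * lam)
          + (k / lam ^ k) * upperIncGamma k (lam * a) := by
  intro k hk
  have hk1 : (0:ℝ) < k + 1 := by linarith
  have hγ : lowerIncGamma (k+1) (a*lam)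
      = lam ^ (k+1) * ∫ x in Ioc (0:ℝ) a, x ^ k * Real.exp (-lam * x) := by
    rw [lowerIncGamma, show k+1-1 = k by ring]
    exact lower_subst ha hlam k
  have hΓ : upperIncGamma k (lam*a)
      = lam ^ k * ∫ x in Ioi a, x ^ (k-1) * Real.exp (-lam * x) := by
    rw [upperIncGamma]
    have h := upper_subst ha hlam (k-1)
    rwa [show k-1+1 = k by ring] at h
  -- integrabilities on the left piece
  have hA : IntegrableOn (fun x : ℝ => x ^ k) (Ioc 0 a) := by
    have h := intervalIntegral.intervalIntegrable_rpow' (a := 0) (b := a) hk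
    rwa [intervalIntegrable_iff_integrableOn_Ioc_of_le ha.le] at h
  have hB := integrableOn_Ioc_rpow_exp ha hk lam
  have hC := integrableOn_Ioc_rpow_exp ha (by linarith : (-1:ℝ) < k + 1) lam
  have hcomb : IntegrableOn (fun x : ℝ =>
      (1/a) * (x ^ k - x ^ k * Real.exp (-lam * x) + lam * (x ^ (k+1) * Real.exp (-lam * x))))
      (Ioc 0 a) := (((hA.sub hB).add (hC.const_mul lam)).const_mul (1/a))
  have hEqL : EqOn (fun x : ℝ =>
      (1/a) * (x ^ k - x ^ k * Real.exp (-lam * x) + lam * (x ^ (k+1) * Real.exp (-lam * x))))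
      (fun x => x ^ k * maxUExpPDF a lam x) (Ioc 0 a) := by
    intro x hx
    have hx0 : 0 < x := hx.1
    simp only [maxUExpPDF, if_neg (not_le.mpr hx0), if_pos hx.2]
    rw [Real.rpow_add_one hx0.ne' k]
    ring
  have hintL : IntegrableOn (fun x => x ^ k * maxUExpPDF a lam x) (Ioc 0 a) :=
    hcomb.congr_fun hEqL measurableSet_Ioc
  have hD := integrableOn_Ioi_rpow_exp ha k hlam
  have hEqR : EqOn (fun x : ℝ => lam * (x ^ k * Real.exp (-lam * x)))
      (fun x => x ^ k * maxUExpPDF a lam x) (Ioi a) := by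
    intro x hx
    have hx0 : a < x := hx
    simp only [maxUExpPDF, if_neg (not_le.mpr (ha.trans hx0)), if_neg (not_le.mpr hx0)]
    ring
  have hD' : IntegrableOn (fun x : ℝ => lam * (x ^ k * Real.exp (-lam * x))) (Ioi a) :=
    hD.const_mul lam
  have hintR : IntegrableOn (fun x => x ^ k * maxUExpPDF a lam x) (Ioi a) :=
    hD'.congr_fun hEqR measurableSet_Ioi
  -- split the integral
  have hunion : Ioc (0:ℝ) a ∪ Ioi a = Ioi 0 := Ioc_union_Ioi_eq_Ioi ha.le
  rw [← hunion, setIntegral_union Ioc_disjoint_Ioi_same measurableSet_Ioi hintL hintR]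
  -- compute the left piece
  have hL : (∫ x in Ioc (0:ℝ) a, x ^ k * maxUExpPDF a lam x)
      = (1/a) * ((∫ x in Ioc (0:ℝ) a, x ^ k)
          - (∫ x in Ioc (0:ℝ) a, x ^ k * Real.exp (-lam * x))
          + lam * (∫ x in Ioc (0:ℝ) a, x ^ (k+1) * Real.exp (-lam * x))) := by
    rw [← setIntegral_congr_fun measurableSet_Ioc hEqL, integral_const_mul]
    congr 1
    have hsub : IntegrableOn (fun x : ℝ => x ^ k - x ^ k * Real.exp (-lam * x)) (Ioc 0 a) :=
      hA.sub hB
    have hCm : IntegrableOn (fun x : ℝ => lam * (x ^ (k+1) * Real.exp (-lam * x))) (Ioc 0 a) :=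
      hC.const_mul lam
    rw [integral_add hsub hCm, integral_sub hA hB, integral_const_mul]
  have hxk : (∫ x in Ioc (0:ℝ) a, x ^ k) = a ^ (k+1) / (k+1) := by
    rw [← intervalIntegral.integral_of_le ha.le, integral_rpow (Or.inl hk),
      Real.zero_rpow hk1.ne', sub_zero]
  -- compute the right piece
  have hR : (∫ x in Ioi a, x ^ k * maxUExpPDF a lam x)
      = lam * ∫ x in Ioi a, x ^ k * Real.exp (-lam * x) := by
    rw [← setIntegral_congr_fun measurableSet_Ioi hEqR, integral_const_mul]
  have hibpR := ibp_Ioi ha hlam k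
  have hibpL := ibp_Ioc ha hk (lam := lam)
  rw [hL, hR, hxk, hγ, hΓ, hibpR, hibpL]
  have ha' : a ≠ 0 := ha.ne'
  have hlamk : lam ^ k ≠ 0 := (Real.rpow_pos_of_pos hlam k).ne'
  have hlamk1 : lam ^ (k+1) ≠ 0 := (Real.rpow_pos_of_pos hlam (k+1)).ne'
  have hak : a ^ (k+1) = a ^ k * a := Real.rpow_add_one ha' k
  rw [hak]
  field_simp
  ring
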